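/- Let α > 1, let z₀ = (r₀, 0) ∈ ℝ², and set r̃ = r₀^{1-α}/(2√3 α). There exists r_α > 0 such that whenever r₀ ≥ r_α, both containments hold: T_α(B_{r̃}(z₀)) ⊂ B₁(T_α(z₀)) and B₁(T_α(z₀)) ⊂ T_α(B₁(z₀)). -/

import Mathlib

open Metric

/-- Real-variable version of the conformal map `z ↦ z ^ α`, in polar coordinates
`(r, θ) ↦ (r ^ α, α θ)`. -/
noncomputable def Tmap (α : ℝ) (z : ℂ) : ℂ :=
  Complex.ofReal (‖z‖ ^ α) * Complex.exp (Complex.I * Complex.ofReal (α * Complex.arg z))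

lemma tmap_eq_cpow (α : ℝ) {z : ℂ} (hz : z ≠ 0) : Tmap α z = z ^ (α : ℂ) := by
  rw [Complex.cpow_def_of_ne_zero hz, Complex.log, Tmap]
  rw [Real.rpow_def_of_pos (by simpa using hz)]
  rw [Complex.ofReal_exp, ← Complex.exp_add]
  congr 1
  push_cast
  ring

/-- Ball containment: for `α > 1`, `z₀ = (r₀, 0)` and `r̃ = r₀^{1-α}/(2√3 α)`, there is
`r_α > 0` such that for all `r₀ ≥ r_α`, `T_α (B_{r̃}(z₀)) ⊆ B₁(T_α z₀)` and
`B₁(T_α z₀) ⊆ T_α (B₁(z₀))`. -/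
theorem ball_containment (α : ℝ) (hα : 1 < α) :
    ∃ r_α > (0 : ℝ), ∀ r₀ : ℝ, r_α ≤ r₀ →
      Tmap α '' ball ((r₀ : ℂ)) (r₀ ^ (1 - α) / (2 * Real.sqrt 3 * α)) ⊆
          ball (Tmap α (r₀ : ℂ)) 1 ∧
        ball (Tmap α (r₀ : ℂ)) 1 ⊆ Tmap α '' ball ((r₀ : ℂ)) 1 := by
  have hα0 : (0:ℝ) < α := by linarith
  have hα1 : (0:ℝ) < α - 1 := by linarith
  set δ : ℝ := 2 ^ ((α-1)⁻¹) - 1 with hδdef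
  have h2pow : (1:ℝ) < 2 ^ ((α-1)⁻¹) :=
    (Real.one_lt_rpow_iff_of_pos (by norm_num)).mpr (Or.inl ⟨by norm_num, by positivity⟩)
  have hδ : 0 < δ := by simp only [hδdef]; linarith
  have hs3 : (1:ℝ) < Real.sqrt 3 := by
    have := Real.sqrt_lt_sqrt (by norm_num : (0:ℝ) ≤ 1) (by norm_num : (1:ℝ) < 3)
    simpa using this
  set A : ℝ := 2 * Real.sqrt 3 * α with hAdef
  have hApos : 0 < A := by positivity
  have hA2 : 2 * α < A := by
    have : 2 * α * 1 < 2 * α * Real.sqrt 3 := by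
      apply mul_lt_mul_of_pos_left hs3 (by positivity)
    simp only [hAdef]; nlinarith
  have hA1 : 1 < A := by nlinarith
  refine ⟨max 2 (1/(A*δ)), lt_max_of_lt_left (by norm_num), ?_⟩
  intro r₀ hr₀
  have hr2 : (2:ℝ) ≤ r₀ := le_trans (le_max_left _ _) hr₀
  have hr1 : (1:ℝ) ≤ r₀ := by linarith
  have hr0 : (0:ℝ) < r₀ := by linarith
  have hinv : 1/r₀ ≤ A*δ := by
    have h1 : 1/(A*δ) ≤ r₀ := le_trans (le_max_right _ _) hr₀
    rw [div_le_iff₀ hr0]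
    rw [div_le_iff₀ (by positivity)] at h1
    nlinarith
  set rt : ℝ := r₀ ^ (1-α) / A with hrtdef
  have hrtpos : 0 < rt := by positivity
  have hr1a : r₀ ^ (1-α) ≤ 1 := Real.rpow_le_one_of_one_le_of_nonpos hr1 (by linarith)
  have hrtlt1 : rt < 1 := by
    rw [hrtdef, div_lt_one hApos]; linarith
  have hsplit : r₀ ^ (1-α) = r₀ * r₀ ^ (-α) := by
    rw [show (1-α) = 1 + (-α) by ring, Real.rpow_add hr0, Real.rpow_one]
  have hneg : r₀ ^ (-α) ≤ 1/r₀ := by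
    have := Real.rpow_le_rpow_of_exponent_le hr1 (by linarith : -α ≤ -1)
    rwa [Real.rpow_neg_one, inv_eq_one_div] at this
  have hrtle : rt ≤ δ * r₀ := by
    rw [hrtdef, div_le_iff₀ hApos, hsplit]
    have h1 : r₀ ^ (-α) ≤ A * δ := le_trans hneg hinv
    have h2 : r₀ * r₀ ^ (-α) ≤ r₀ * (A * δ) :=
      mul_le_mul_of_nonneg_left h1 hr0.le
    nlinarith
  have hr0c : ((r₀:ℂ)) ≠ 0 := by
    simp only [ne_eq, Complex.ofReal_eq_zero]; linarith
  have hTr : Tmap α (r₀:ℂ) = ((r₀ ^ α : ℝ):ℂ) := by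
    rw [tmap_eq_cpow α hr0c, Complex.ofReal_cpow hr0.le]
  constructor
  · -- first containment
    rintro w ⟨z, hz, rfl⟩
    set s := ball ((r₀:ℂ)) rt with hsdef
    have hre : ∀ x : ℂ, x ∈ s → 1 ≤ x.re := by
      intro x hx
      rw [hsdef, mem_ball, dist_eq_norm] at hx
      have h1 : |x.re - r₀| ≤ ‖x - (r₀:ℂ)‖ := by
        simpa using Complex.abs_re_le_norm (x - (r₀:ℂ))
      have := abs_le.mp (le_of_lt (lt_of_le_of_lt h1 hx))
      linarith
    have habs : ∀ x : ℂ, x ∈ s → ‖x‖ ≤ (1+δ) * r₀ := by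
      intro x hx
      rw [hsdef, mem_ball, dist_eq_norm] at hx
      have h1 : ‖x‖ ≤ ‖(r₀:ℂ)‖ + ‖x - (r₀:ℂ)‖ := by
        simpa using norm_add_le (r₀:ℂ) (x - (r₀:ℂ))
      have h2 : ‖(r₀:ℂ)‖ = r₀ := by
        simp [abs_of_pos hr0]
      nlinarith
    set C : ℝ := α * ((1+δ) * r₀) ^ (α-1) with hCdef
    have hCpos : 0 < C := by positivity
    have hderiv : ∀ x ∈ s, HasFDerivWithinAt (fun y : ℂ => y ^ (α:ℂ))
        (ContinuousLinearMap.smulRight (1 : ℂ →L[ℂ] ℂ) ((α:ℂ) * x ^ ((α:ℂ)-1))) s x := by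
      intro x hx
      have hslit : x ∈ Complex.slitPlane :=
        Complex.mem_slitPlane_iff.mpr (Or.inl (by linarith [hre x hx]))
      exact ((Complex.hasStrictDerivAt_cpow_const hslit).hasDerivAt).hasFDerivAt.hasFDerivWithinAt
    have hbound : ∀ x ∈ s,
        ‖ContinuousLinearMap.smulRight (1 : ℂ →L[ℂ] ℂ) ((α:ℂ) * x ^ ((α:ℂ)-1))‖ ≤ C := by
      intro x hx
      rw [ContinuousLinearMap.norm_smulRight_apply, norm_one, one_mul]
      have hc : ((α:ℂ)-1) = ((α-1 : ℝ):ℂ) := by push_cast; ring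
      rw [norm_mul, hc, Complex.norm_cpow_real,
        Complex.norm_real, Real.norm_eq_abs, abs_of_pos hα0, hCdef]
      apply mul_le_mul_of_nonneg_left _ hα0.le
      exact Real.rpow_le_rpow (norm_nonneg x) (habs x hx) hα1.le
    have hzmem : z ∈ s := hz
    have hcmem : (r₀:ℂ) ∈ s := mem_ball_self hrtpos
    have mvt := (convex_ball ((r₀:ℂ)) rt).norm_image_sub_le_of_norm_hasFDerivWithin_le
      hderiv hbound hcmem hzmem
    have hz0 : z ≠ 0 := by
      intro h; have := hre z hzmem; rw [h] at this; simp at this; linarith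
    have hzr : ‖z - (r₀:ℂ)‖ < rt := by
      rw [hsdef, mem_ball, dist_eq_norm] at hzmem; exact hzmem
    have hCrt : C * rt < 1 := by
      have h1 : ((1+δ) * r₀) ^ (α-1) = (1+δ)^(α-1) * r₀^(α-1) :=
        Real.mul_rpow (by positivity) hr0.le
      have h2 : (1+δ)^(α-1) = 2 := by
        rw [hδdef, show (1 + (2 ^ ((α-1)⁻¹) - 1)) = (2:ℝ)^((α-1)⁻¹) by ring,
          ← Real.rpow_mul (by norm_num : (0:ℝ) ≤ 2), inv_mul_cancel₀ hα1.ne', Real.rpow_one]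
      have h3 : r₀^(α-1) * r₀^(1-α) = 1 := by
        rw [← Real.rpow_add hr0]; norm_num
      have hC : C * rt = 2 * α / A := by
        calc C * rt = (2*α/A) * (r₀^(α-1) * r₀^(1-α)) := by
              rw [hCdef, hrtdef, h1, h2]; ring
          _ = 2*α/A := by rw [h3, mul_one]
      rw [hC, div_lt_one hApos]; linarith
    rw [mem_ball, dist_eq_norm, tmap_eq_cpow α hz0, tmap_eq_cpow α hr0c]
    calc ‖z ^ (α:ℂ) - (r₀:ℂ) ^ (α:ℂ)‖ ≤ C * ‖z - (r₀:ℂ)‖ := mvt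
      _ < C * rt := by apply mul_lt_mul_of_pos_left hzr hCpos
      _ < 1 := hCrt
  · -- second containment
    intro w hw
    rw [hTr] at hw
    set c : ℝ := r₀ ^ α with hcdef
    have hc2 : (2:ℝ) ≤ c := by
      have := Real.rpow_le_rpow_of_exponent_le hr1 hα.le
      rw [Real.rpow_one] at this; linarith
    set t := ball (((c:ℝ):ℂ)) 1 with htdef
    have hre : ∀ x : ℂ, x ∈ t → 1 ≤ x.re := by
      intro x hx
      rw [htdef, mem_ball, dist_eq_norm] at hx
      have h1 : |x.re - c| ≤ ‖x - ((c:ℝ):ℂ)‖ := by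
        simpa using Complex.abs_re_le_norm (x - ((c:ℝ):ℂ))
      have := abs_le.mp (le_of_lt (lt_of_le_of_lt h1 hx))
      linarith
    have habs1 : ∀ x : ℂ, x ∈ t → 1 ≤ ‖x‖ := by
      intro x hx
      exact le_trans (hre x hx) (le_trans (Complex.re_le_norm x) (le_refl _))
    have hderiv : ∀ x ∈ t, HasFDerivWithinAt (fun y : ℂ => y ^ (((α⁻¹:ℝ)):ℂ))
        (ContinuousLinearMap.smulRight (1 : ℂ →L[ℂ] ℂ)
          ((((α⁻¹:ℝ)):ℂ) * x ^ ((((α⁻¹:ℝ)):ℂ)-1))) t x := by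
      intro x hx
      have hslit : x ∈ Complex.slitPlane :=
        Complex.mem_slitPlane_iff.mpr (Or.inl (by linarith [hre x hx]))
      exact ((Complex.hasStrictDerivAt_cpow_const hslit).hasDerivAt).hasFDerivAt.hasFDerivWithinAt
    have hbound : ∀ x ∈ t,
        ‖ContinuousLinearMap.smulRight (1 : ℂ →L[ℂ] ℂ)
          ((((α⁻¹:ℝ)):ℂ) * x ^ ((((α⁻¹:ℝ)):ℂ)-1))‖ ≤ α⁻¹ := by
      intro x hx
      rw [ContinuousLinearMap.norm_smulRight_apply, norm_one, one_mul]
      have hc' : ((((α⁻¹:ℝ)):ℂ)-1) = ((α⁻¹-1 : ℝ):ℂ) := by push_cast; ring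
      rw [norm_mul, hc', Complex.norm_cpow_real,
        Complex.norm_real, Real.norm_eq_abs, abs_of_pos (by positivity : (0:ℝ) < α⁻¹)]
      have h1 : ‖x‖ ^ (α⁻¹ - 1) ≤ 1 := by
        apply Real.rpow_le_one_of_one_le_of_nonpos (habs1 x hx)
        have : α⁻¹ < 1 := by
          rw [inv_lt_one_iff₀]; right; exact hα
        linarith
      nlinarith [inv_pos.mpr hα0]
    have hwmem : w ∈ t := hw
    have hcmem : ((c:ℝ):ℂ) ∈ t := mem_ball_self one_pos
    have mvt := (convex_ball (((c:ℝ):ℂ)) 1).norm_image_sub_le_of_norm_hasFDerivWithin_le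
      hderiv hbound hcmem hwmem
    have hgc : ((c:ℝ):ℂ) ^ (((α⁻¹:ℝ)):ℂ) = (r₀:ℂ) := by
      rw [← Complex.ofReal_cpow (by positivity : (0:ℝ) ≤ c), hcdef,
        ← Real.rpow_mul hr0.le, mul_inv_cancel₀ hα0.ne', Real.rpow_one]
    set z : ℂ := w ^ (((α⁻¹:ℝ)):ℂ) with hzdef
    have hw0 : w ≠ 0 := by
      intro h
      have := habs1 w hwmem
      rw [h, norm_zero] at this; linarith
    have hz0 : z ≠ 0 := by
      rw [hzdef, Complex.cpow_def_of_ne_zero hw0]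
      exact Complex.exp_ne_zero _
    have hwdist : ‖w - ((c:ℝ):ℂ)‖ < 1 := by
      rw [htdef, mem_ball, dist_eq_norm] at hwmem; exact hwmem
    have hzball : z ∈ ball ((r₀:ℂ)) 1 := by
      rw [mem_ball, dist_eq_norm, ← hgc]
      calc ‖z - ((c:ℝ):ℂ) ^ (((α⁻¹:ℝ)):ℂ)‖ ≤ α⁻¹ * ‖w - ((c:ℝ):ℂ)‖ := mvt
        _ < α⁻¹ * 1 := by
            apply mul_lt_mul_of_pos_left hwdist (by positivity)
        _ ≤ 1 := by
            rw [mul_one]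
            exact le_of_lt (by rw [inv_lt_one_iff₀]; right; exact hα)
    refine ⟨z, hzball, ?_⟩
    have harg : -Real.pi < (Complex.log w * (((α⁻¹:ℝ)):ℂ)).im ∧
        (Complex.log w * (((α⁻¹:ℝ)):ℂ)).im ≤ Real.pi := by
      have him : (Complex.log w * (((α⁻¹:ℝ)):ℂ)).im = Complex.arg w * α⁻¹ := by
        simp [Complex.mul_im, Complex.log_im]
      rw [him]
      have h1 := Complex.neg_pi_lt_arg w
      have h2 := Complex.arg_le_pi w
      have hπ := Real.pi_pos
      have hi1 : (0:ℝ) < α⁻¹ := by positivity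
      have hi2 : α⁻¹ < 1 := by rw [inv_lt_one_iff₀]; right; exact hα
      constructor
      · rcases le_or_gt 0 (Complex.arg w) with h | h
        · have : 0 ≤ Complex.arg w * α⁻¹ := mul_nonneg h hi1.le
          linarith
        · have h3 : Complex.arg w * 1 < Complex.arg w * α⁻¹ :=
            mul_lt_mul_of_neg_left hi2 h
          rw [mul_one] at h3; linarith
      · rcases le_or_gt (Complex.arg w) 0 with h | h
        · have : Complex.arg w * α⁻¹ ≤ 0 := mul_nonpos_of_nonpos_of_nonneg h hi1.le
          linarith
        · have h3 : Complex.arg w * α⁻¹ ≤ Complex.arg w * 1 :=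
            mul_le_mul_of_nonneg_left hi2.le h.le
          rw [mul_one] at h3; linarith
    have hmul : (((α⁻¹:ℝ)):ℂ) * (α:ℂ) = 1 := by
      rw [← Complex.ofReal_mul, inv_mul_cancel₀ hα0.ne', Complex.ofReal_one]
    rw [tmap_eq_cpow α hz0, hzdef, ← Complex.cpow_mul (α:ℂ) harg.1 harg.2, hmul,
      Complex.cpow_one]
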